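/- Let X be a separable normed space. Then there is a norm |||·||| on X equivalent to the given norm such that: for every finite-dimensional linear subspace M ⊆ X and every ε > 0 there is a linear subspace L ⊆ X of finite codimension such that M ∩ L = {0} and, for the projection P : M + L → L of ⟨L,M⟩, the operator norm of P with respect to |||·||| is < 1 + ε. -/

import Mathlib

open Metric

open Metric Filter Topology

set_option linter.unusedSectionVars false

section Scheme
variable (X : Type*) [NormedAddCommGroup X] [NormedSpace ℝ X]
  [TopologicalSpace.SeparableSpace X]

noncomputable def yseq : ℕ → X := TopologicalSpace.denseSeq X

lemma yseq_dense : DenseRange (yseq X) := TopologicalSpace.denseRange_denseSeq X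

noncomputable def wseq (i : ℕ) : ℝ := (1/2)^i / (4 * (1 + ‖yseq X i‖))

lemma wseq_pos (i : ℕ) : 0 < wseq X i := by
  apply div_pos (by positivity)
  positivity

lemma wseq_le (i : ℕ) : wseq X i ≤ (1/2)^i / 4 := by
  apply div_le_div_of_nonneg_left (by positivity) (by positivity)
  nlinarith [norm_nonneg (yseq X i)]

lemma wseq_mul_norm_le (i : ℕ) : wseq X i * ‖yseq X i‖ ≤ (1/2)^i / 4 := by
  rw [wseq, div_mul_eq_mul_div, div_le_div_iff₀ (by positivity) (by norm_num)]
  nlinarith [norm_nonneg (yseq X i), pow_pos (by norm_num : (0:ℝ) < 1/2) i]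

noncomputable def Dfun (h : X →L[ℝ] ℝ) : ℝ := ∑' i, wseq X i * |h (yseq X i)|

lemma Dfun_term_le (h : X →L[ℝ] ℝ) (i : ℕ) :
    wseq X i * |h (yseq X i)| ≤ (1/2)^i / 4 * ‖h‖ := by
  calc wseq X i * |h (yseq X i)| ≤ wseq X i * (‖h‖ * ‖yseq X i‖) := by
        apply mul_le_mul_of_nonneg_left (h.le_opNorm _) (le_of_lt (wseq_pos X i))
      _ ≤ (1/2)^i / 4 * ‖h‖ := by
        rw [mul_comm (‖h‖) _, ← mul_assoc]
        apply mul_le_mul_of_nonneg_right (wseq_mul_norm_le X i) (norm_nonneg h)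

lemma summable_Dfun (h : X →L[ℝ] ℝ) :
    Summable (fun i => wseq X i * |h (yseq X i)|) := by
  apply Summable.of_nonneg_of_le
    (fun i => mul_nonneg (wseq_pos X i).le (abs_nonneg _)) (fun i => Dfun_term_le X h i)
  simpa [div_mul_eq_mul_div] using
    ((summable_geometric_two).mul_right (‖h‖)).div_const 4

lemma Dfun_nonneg (h : X →L[ℝ] ℝ) : 0 ≤ Dfun X h :=
  tsum_nonneg (fun i => mul_nonneg (wseq_pos X i).le (abs_nonneg _))

lemma Dfun_le_half (h : X →L[ℝ] ℝ) : Dfun X h ≤ ‖h‖ / 2 := by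
  have := Summable.tsum_le_tsum (Dfun_term_le X h) (summable_Dfun X h)
    (by simpa [div_mul_eq_mul_div] using ((summable_geometric_two).mul_right (‖h‖)).div_const 4)
  calc Dfun X h ≤ ∑' i, (1/2:ℝ)^i / 4 * ‖h‖ := this
    _ = (∑' i, (1/2:ℝ)^i) * ‖h‖ / 4 := by
        rw [← tsum_mul_right, ← tsum_div_const]
        exact tsum_congr (fun i => by ring)
    _ = ‖h‖ / 2 := by rw [tsum_geometric_two]; ring

lemma Dfun_add (g h : X →L[ℝ] ℝ) : Dfun X (g + h) ≤ Dfun X g + Dfun X h := by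
  rw [Dfun, Dfun, Dfun, ← Summable.tsum_add (summable_Dfun X g) (summable_Dfun X h)]
  apply Summable.tsum_le_tsum _ (summable_Dfun X _)
    ((summable_Dfun X g).add (summable_Dfun X h))
  intro i
  rw [← mul_add]
  apply mul_le_mul_of_nonneg_left _ (le_of_lt (wseq_pos X i))
  simpa using abs_add_le (g (yseq X i)) (h (yseq X i))

lemma Dfun_eval_le (h : X →L[ℝ] ℝ) (i : ℕ) :
    |h (yseq X i)| ≤ Dfun X h / wseq X i := by
  rw [le_div_iff₀ (wseq_pos X i), mul_comm]
  exact Summable.le_tsum (summable_Dfun X h) i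
    (fun j _ => mul_nonneg (wseq_pos X j).le (abs_nonneg _))

lemma Dfun_eval (h : X →L[ℝ] ℝ) (x : X) (i : ℕ) :
    |h x| ≤ ‖h‖ * ‖x - yseq X i‖ + Dfun X h / wseq X i := by
  have : h x = h (x - yseq X i) + h (yseq X i) := by
    rw [map_sub]; ring
  rw [this]
  refine (abs_add_le _ _).trans (add_le_add ?_ (Dfun_eval_le X h i))
  exact h.le_opNorm _


set_option maxHeartbeats 1000000 in
lemma netex (ε : ℝ) (hε : 0 < ε) :
    ∃ (n : ℕ) (a : ℕ → X →L[ℝ] ℝ), 0 < n ∧ (∀ j, ‖a j‖ ≤ 1) ∧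
      ∀ g : X →L[ℝ] ℝ, ‖g‖ ≤ 1 → ∃ j < n, Dfun X (g - a j) ≤ ε := by
  classical
  obtain ⟨I, hI⟩ := exists_pow_lt_of_lt_one (by linarith : (0:ℝ) < ε/2)
    (by norm_num : (1:ℝ)/2 < 1)
  replace hI : ((1:ℝ)/2)^I ≤ ε/2 := hI.le
  set B : Set (X →L[ℝ] ℝ) := {g | ‖g‖ ≤ 1} with hB
  set Ψ : (X →L[ℝ] ℝ) → (Fin I → ℝ) := fun g j => g (yseq X j) with hΨ
  set R : ℝ := 1 + ∑ j : Fin I, ‖yseq X (j : ℕ)‖ with hR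
  have hR0 : 0 ≤ R := by
    have : (0:ℝ) ≤ ∑ j : Fin I, ‖yseq X (j : ℕ)‖ :=
      Finset.sum_nonneg (fun j _ => norm_nonneg _)
    linarith
  have hsub : Ψ '' B ⊆ closedBall 0 R := by
    rintro p ⟨g, hg, rfl⟩
    rw [mem_closedBall, dist_zero_right]
    rw [pi_norm_le_iff_of_nonneg hR0]
    intro j
    have h1 : |g (yseq X (j:ℕ))| ≤ ‖yseq X (j:ℕ)‖ := by
      have := g.le_opNorm (yseq X (j:ℕ))
      have hg1 : ‖g‖ ≤ 1 := hg
      calc |g (yseq X (j:ℕ))| ≤ ‖g‖ * ‖yseq X (j:ℕ)‖ := this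
        _ ≤ 1 * ‖yseq X (j:ℕ)‖ := by
            exact mul_le_mul_of_nonneg_right hg1 (norm_nonneg _)
        _ = ‖yseq X (j:ℕ)‖ := one_mul _
    have h2 : ‖yseq X (j:ℕ)‖ ≤ R := by
      rw [hR]
      have : ‖yseq X (j:ℕ)‖ ≤ ∑ j : Fin I, ‖yseq X (j : ℕ)‖ :=
        Finset.single_le_sum (f := fun j : Fin I => ‖yseq X (j:ℕ)‖)
          (fun j _ => norm_nonneg _) (Finset.mem_univ j)
      linarith
    exact (le_trans h1 h2)
  have tb : TotallyBounded (Ψ '' B) :=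
    (isCompact_closedBall (0 : Fin I → ℝ) R).totallyBounded.subset hsub
  obtain ⟨t, htsub, htfin, htcov⟩ := finite_approx_of_totallyBounded tb (ε/4) (by linarith)
  -- enumerate t and pick preimages
  set l := htfin.toFinset.toList with hl
  have hmeml : ∀ p ∈ l, p ∈ Ψ '' B := by
    intro p hp
    rw [hl, Finset.mem_toList, Set.Finite.mem_toFinset] at hp
    exact htsub hp
  set n := l.length + 1 with hn
  have pick : ∀ p ∈ Ψ '' B, ∃ g, ‖g‖ ≤ 1 ∧ Ψ g = p := by
    rintro p ⟨g, hg, rfl⟩; exact ⟨g, hg, rfl⟩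
  set a : ℕ → (X →L[ℝ] ℝ) := fun j =>
    if h : j < l.length then (pick _ (hmeml (l.get ⟨j, h⟩) (l.get_mem _))).choose
    else 0 with ha
  refine ⟨n, a, Nat.succ_pos _, ?_, ?_⟩
  · intro j
    rw [ha]
    by_cases h : j < l.length
    · simp only [dif_pos h]
      exact (pick _ (hmeml (l.get ⟨j, h⟩) (l.get_mem _))).choose_spec.1
    · simp [dif_neg h]
  · intro g hg
    have : Ψ g ∈ ⋃ y ∈ t, ball y (ε/4) := htcov ⟨g, hg, rfl⟩
    rw [Set.mem_iUnion₂] at this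
    obtain ⟨p, hp, hdist⟩ := this
    have hpl : p ∈ l := by
      rw [hl, Finset.mem_toList, Set.Finite.mem_toFinset]; exact hp
    obtain ⟨jf, hjget⟩ := List.get_of_mem hpl
    rw [← hjget] at hdist
    refine ⟨(jf : ℕ), by have := jf.isLt; omega, ?_⟩
    -- key estimate
    have hdef : a (jf : ℕ) = (pick _ (hmeml (l.get jf) (l.get_mem _))).choose := by
      rw [ha]
      have hlt : (jf : ℕ) < l.length := jf.isLt
      simp only [dif_pos hlt]
    have haj1 : ‖a (jf : ℕ)‖ ≤ 1 := by
      rw [hdef]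
      exact (pick _ (hmeml (l.get jf) (l.get_mem _))).choose_spec.1
    have haj2 : Ψ (a (jf : ℕ)) = l.get jf := by
      rw [hdef]
      exact (pick _ (hmeml (l.get jf) (l.get_mem _))).choose_spec.2
    have hga : ‖g - a (jf : ℕ)‖ ≤ 2 := by
      calc ‖g - a (jf : ℕ)‖ ≤ ‖g‖ + ‖a (jf : ℕ)‖ := norm_sub_le _ _
        _ ≤ 2 := by linarith [haj1]
    -- split the tsum
    have hsummable := summable_Dfun X (g - a (jf:ℕ))
    have hsplit := (Summable.sum_add_tsum_nat_add (f := fun i => wseq X i * |(g - a (jf:ℕ)) (yseq X i)|)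
      I hsummable).symm
    have hhead : ∑ i ∈ Finset.range I, wseq X i * |(g - a (jf:ℕ)) (yseq X i)| ≤ ε / 8 := by
      have hterm : ∀ i ∈ Finset.range I,
          wseq X i * |(g - a (jf:ℕ)) (yseq X i)| ≤ wseq X i * (ε/4) := by
        intro i hi
        rw [Finset.mem_range] at hi
        apply mul_le_mul_of_nonneg_left _ (wseq_pos X i).le
        have : (g - a (jf:ℕ)) (yseq X i) = Ψ g ⟨i, hi⟩ - Ψ (a (jf:ℕ)) ⟨i, hi⟩ := by
          simp [hΨ]
        rw [this, haj2]
        have := dist_le_pi_dist (Ψ g) (l.get jf) ⟨i, hi⟩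
        rw [Real.dist_eq] at this
        have h2 : dist (Ψ g) (l.get jf) < ε/4 := hdist
        calc |Ψ g ⟨i, hi⟩ - l.get jf ⟨i, hi⟩| ≤ dist (Ψ g) (l.get jf) := this
          _ ≤ ε/4 := h2.le
      calc ∑ i ∈ Finset.range I, wseq X i * |(g - a (jf:ℕ)) (yseq X i)|
          ≤ ∑ i ∈ Finset.range I, wseq X i * (ε/4) := Finset.sum_le_sum hterm
        _ ≤ ∑ i ∈ Finset.range I, ((1:ℝ)/2)^i/4 * (ε/4) := by
            apply Finset.sum_le_sum
            intro i _
            exact mul_le_mul_of_nonneg_right (wseq_le X i) (by linarith)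
        _ = (∑ i ∈ Finset.range I, ((1:ℝ)/2)^i) * (ε/16) := by
            rw [Finset.sum_mul]
            exact Finset.sum_congr rfl (fun i _ => by ring)
        _ ≤ 2 * (ε/16) := by
            apply mul_le_mul_of_nonneg_right _ (by linarith)
            have := sum_geometric_two_le I
            simpa using this
        _ = ε/8 := by ring
    have htail : ∑' i, wseq X (i + I) * |(g - a (jf:ℕ)) (yseq X (i + I))| ≤ ε / 2 := by
      have hb : ∀ i : ℕ, wseq X (i+I) * |(g - a (jf:ℕ)) (yseq X (i+I))|
          ≤ ((1:ℝ)/2)^(i+I) / 2 := by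
        intro i
        calc wseq X (i+I) * |(g - a (jf:ℕ)) (yseq X (i+I))|
            ≤ ((1:ℝ)/2)^(i+I)/4 * ‖g - a (jf:ℕ)‖ := Dfun_term_le X _ _
          _ ≤ ((1:ℝ)/2)^(i+I)/4 * 2 := by
              apply mul_le_mul_of_nonneg_left hga (by positivity)
          _ = ((1:ℝ)/2)^(i+I)/2 := by ring
      have hsum2 : Summable (fun i : ℕ => ((1:ℝ)/2)^(i+I)/2) := by
        apply Summable.div_const
        simpa [pow_add] using (summable_geometric_two.mul_right (((1:ℝ)/2)^I))
      calc ∑' i, wseq X (i + I) * |(g - a (jf:ℕ)) (yseq X (i + I))|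
          ≤ ∑' i : ℕ, ((1:ℝ)/2)^(i+I)/2 :=
            Summable.tsum_le_tsum hb ((summable_nat_add_iff I).mpr hsummable) hsum2
        _ = (∑' i : ℕ, ((1:ℝ)/2)^i) * ((1:ℝ)/2)^I / 2 := by
            rw [← tsum_mul_right, ← tsum_div_const]
            exact tsum_congr (fun i => by rw [pow_add])
        _ = ((1:ℝ)/2)^I := by rw [tsum_geometric_two]; ring
        _ ≤ ε/2 := hI
    calc Dfun X (g - a (jf:ℕ)) = _ := hsplit
      _ ≤ ε/8 + ε/2 := add_le_add hhead htail
      _ ≤ ε := by linarith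


noncomputable def nn (t : ℕ) : ℕ :=
  (netex X ((1/2:ℝ)^t) (by positivity)).choose

noncomputable def aa (t : ℕ) : ℕ → (X →L[ℝ] ℝ) :=
  (netex X ((1/2:ℝ)^t) (by positivity)).choose_spec.choose

lemma nn_aa_spec (t : ℕ) : 0 < nn X t ∧ (∀ j, ‖aa X t j‖ ≤ 1) ∧
    ∀ g : X →L[ℝ] ℝ, ‖g‖ ≤ 1 → ∃ j < nn X t, Dfun X (g - aa X t j) ≤ (1/2:ℝ)^t :=
  (netex X ((1/2:ℝ)^t) (by positivity)).choose_spec.choose_spec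

lemma nn_pos (t : ℕ) : 0 < nn X t := (nn_aa_spec X t).1
lemma aa_norm_le (t : ℕ) (j : ℕ) : ‖aa X t j‖ ≤ 1 := (nn_aa_spec X t).2.1 j
lemma aa_net (t : ℕ) {g : X →L[ℝ] ℝ} (hg : ‖g‖ ≤ 1) :
    ∃ j < nn X t, Dfun X (g - aa X t j) ≤ (1/2:ℝ)^t := (nn_aa_spec X t).2.2 g hg

noncomputable def sfun : ℕ → ℕ
  | 0 => 0
  | t+1 => sfun t + nn X t

lemma sfun_lt_succ (t : ℕ) : sfun X t < sfun X (t+1) := by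
  have := nn_pos X t
  simp only [sfun]
  omega

lemma sfun_mono : StrictMono (sfun X) := strictMono_nat_of_lt_succ (sfun_lt_succ X)

noncomputable def decode (σ : ℕ → Bool) (t : ℕ) : ℕ :=
  ((Finset.range (nn X t)).filter (fun i => σ (sfun X t + i) = true)).card

noncomputable def pos (σ : ℕ → Bool) : ℕ → (X →L[ℝ] ℝ)
  | 0 => 0
  | t+1 =>
    if Dfun X (aa X t (min (decode X σ t) (nn X t - 1)) - pos σ t) ≤ 3*(1/2:ℝ)^t
    then aa X t (min (decode X σ t) (nn X t - 1)) else pos σ t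

lemma pos_norm_le (σ : ℕ → Bool) (t : ℕ) : ‖pos X σ t‖ ≤ 1 := by
  induction t with
  | zero => simp [pos]
  | succ t ih =>
    rw [pos]
    split
    · exact aa_norm_le X t _
    · exact ih

lemma Dfun_zero : Dfun X 0 = 0 := by
  rw [Dfun]
  convert tsum_zero with i
  simp

lemma Dfun_neg (h : X →L[ℝ] ℝ) : Dfun X (-h) = Dfun X h := by
  rw [Dfun, Dfun]
  exact tsum_congr (fun i => by simp)

lemma pos_step (σ : ℕ → Bool) (t : ℕ) :
    Dfun X (pos X σ (t+1) - pos X σ t) ≤ 3*(1/2:ℝ)^t := by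
  rw [pos]
  split
  · assumption
  · simp only [sub_self, Dfun_zero]
    positivity

lemma pos_travel (σ : ℕ → Bool) (t t' : ℕ) (h : t ≤ t') :
    Dfun X (pos X σ t' - pos X σ t) ≤ 6*((1/2:ℝ)^t - (1/2:ℝ)^t') := by
  induction t', h using Nat.le_induction with
  | base => simp [sub_self, Dfun_zero]
  | succ t' ht' ih =>
    have h1 : pos X σ (t'+1) - pos X σ t
        = (pos X σ (t'+1) - pos X σ t') + (pos X σ t' - pos X σ t) := by
      abel
    rw [h1]
    have h2 := Dfun_add X (pos X σ (t'+1) - pos X σ t') (pos X σ t' - pos X σ t)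
    have h3 := pos_step X σ t'
    have h4 : ((1:ℝ)/2)^(t'+1) = ((1:ℝ)/2)^t' * (1/2) := pow_succ _ _
    linarith

lemma pos_travel' (σ : ℕ → Bool) (t t' : ℕ) (h : t ≤ t') :
    Dfun X (pos X σ t' - pos X σ t) ≤ 6*(1/2:ℝ)^t := by
  have := pos_travel X σ t t' h
  have : (0:ℝ) ≤ (1/2:ℝ)^t' := by positivity
  linarith [pos_travel X σ t t' h]

lemma pos_local (σ σ' : ℕ → Bool) (t : ℕ) (h : ∀ i < sfun X t, σ i = σ' i) :
    pos X σ t = pos X σ' t := by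
  induction t with
  | zero => rfl
  | succ t ih =>
    have hmono : sfun X t < sfun X (t+1) := sfun_lt_succ X t
    have hprev : pos X σ t = pos X σ' t :=
      ih (fun i hi => h i (lt_trans hi hmono))
    have hdec : decode X σ t = decode X σ' t := by
      rw [decode, decode]
      congr 1
      apply Finset.filter_congr
      intro i hi
      rw [Finset.mem_range] at hi
      have : sfun X t + i < sfun X (t+1) := by
        simp only [sfun]; omega
      rw [h _ this]
    rw [pos, pos, hdec, hprev]

lemma pos_sub_norm (σ σ' : ℕ → Bool) (t t' : ℕ) :
    ‖pos X σ t - pos X σ' t'‖ ≤ 2 := by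
  calc ‖pos X σ t - pos X σ' t'‖ ≤ ‖pos X σ t‖ + ‖pos X σ' t'‖ := norm_sub_le _ _
    _ ≤ 2 := by linarith [pos_norm_le X σ t, pos_norm_le X σ' t']

lemma pos_eval_le (g : X →L[ℝ] ℝ) (hg : ‖g‖ ≤ 2) (x : X) (i : ℕ) :
    |g x| ≤ 2 * ‖x - yseq X i‖ + Dfun X g / wseq X i := by
  have h1 := Dfun_eval X g x i
  have h2 : ‖g‖ * ‖x - yseq X i‖ ≤ 2 * ‖x - yseq X i‖ :=
    mul_le_mul_of_nonneg_right hg (norm_nonneg _)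
  linarith

lemma pos_cauchy (σ : ℕ → Bool) (x : X) : CauchySeq (fun t => pos X σ t x) := by
  rw [Metric.cauchySeq_iff']
  intro ε hε
  obtain ⟨i, hi⟩ : ∃ i, dist x (yseq X i) < ε/8 :=
    (yseq_dense X).exists_dist_lt x (by linarith)
  obtain ⟨N, hN⟩ := exists_pow_lt_of_lt_one
    (show (0:ℝ) < (ε/2) * wseq X i / 6 by
      have := wseq_pos X i; positivity)
    (by norm_num : (1:ℝ)/2 < 1)
  refine ⟨N, fun n hn => ?_⟩
  have key : |(pos X σ n - pos X σ N) x| ≤ 2 * ‖x - yseq X i‖ + 6*(1/2:ℝ)^N / wseq X i := by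
    refine (pos_eval_le X _ (pos_sub_norm X σ σ n N) x i).trans ?_
    have h3 : Dfun X (pos X σ n - pos X σ N) ≤ 6*(1/2:ℝ)^N := pos_travel' X σ N n hn
    have := wseq_pos X i
    gcongr
  have hd : dist (pos X σ n x) (pos X σ N x) = |(pos X σ n - pos X σ N) x| := by
    rw [Real.dist_eq, ContinuousLinearMap.sub_apply]
  rw [hd]
  have h5 : 6*(1/2:ℝ)^N / wseq X i < ε/2 := by
    rw [div_lt_iff₀ (wseq_pos X i)]
    calc 6*(1/2:ℝ)^N < 6 * ((ε/2) * wseq X i / 6) := by linarith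
      _ = ε/2 * wseq X i := by ring
  have h6 : ‖x - yseq X i‖ < ε/8 := by
    rw [← dist_eq_norm]; exact hi
  calc |(pos X σ n - pos X σ N) x| ≤ 2 * ‖x - yseq X i‖ + 6*(1/2:ℝ)^N / wseq X i := key
    _ < 2 * (ε/8) + ε/2 := by linarith
    _ < ε := by linarith

lemma pos_lim_ex (σ : ℕ → Bool) (x : X) :
    ∃ l, Filter.Tendsto (fun t => pos X σ t x) Filter.atTop (nhds l) :=
  cauchySeq_tendsto_of_complete (pos_cauchy X σ x)

noncomputable def phi0 (σ : ℕ → Bool) (x : X) : ℝ := (pos_lim_ex X σ x).choose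

lemma phi0_tendsto (σ : ℕ → Bool) (x : X) :
    Filter.Tendsto (fun t => pos X σ t x) Filter.atTop (nhds (phi0 X σ x)) :=
  (pos_lim_ex X σ x).choose_spec

lemma phi0_bound (σ : ℕ → Bool) (x : X) : |phi0 X σ x| ≤ 1 * ‖x‖ := by
  rw [one_mul]
  have habs : Filter.Tendsto (fun t => |pos X σ t x|) Filter.atTop (nhds |phi0 X σ x|) :=
    (phi0_tendsto X σ x).abs
  apply le_of_tendsto habs
  filter_upwards with t
  calc |pos X σ t x| ≤ ‖pos X σ t‖ * ‖x‖ := (pos X σ t).le_opNorm x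
    _ ≤ 1 * ‖x‖ := mul_le_mul_of_nonneg_right (pos_norm_le X σ t) (norm_nonneg _)
    _ = ‖x‖ := one_mul _

noncomputable def phi (σ : ℕ → Bool) : X →L[ℝ] ℝ :=
  LinearMap.mkContinuous
    { toFun := phi0 X σ
      map_add' := fun x x' => by
        apply tendsto_nhds_unique (phi0_tendsto X σ (x + x'))
        have : (fun t => pos X σ t (x + x')) = fun t => pos X σ t x + pos X σ t x' := by
          funext t; exact map_add _ _ _
        rw [this]
        exact (phi0_tendsto X σ x).add (phi0_tendsto X σ x')
      map_smul' := fun c x => by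
        simp only [RingHom.id_apply]
        apply tendsto_nhds_unique (phi0_tendsto X σ (c • x))
        have : (fun t => pos X σ t (c • x)) = fun t => c * pos X σ t x := by
          funext t
          rw [map_smul]
          simp
        rw [this]
        exact (phi0_tendsto X σ x).const_mul c }
    1 (fun x => by simpa using phi0_bound X σ x)

lemma phi_norm_le (σ : ℕ → Bool) : ‖phi X σ‖ ≤ 1 :=
  LinearMap.mkContinuous_norm_le _ zero_le_one _

lemma phi_tendsto (σ : ℕ → Bool) (x : X) :
    Filter.Tendsto (fun t => pos X σ t x) Filter.atTop (nhds (phi X σ x)) :=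
  phi0_tendsto X σ x

lemma phi_approx (σ : ℕ → Bool) (x : X) (m i : ℕ) :
    |phi X σ x - pos X σ m x| ≤ 2 * ‖x - yseq X i‖ + 6*(1/2:ℝ)^m / wseq X i := by
  have habs : Filter.Tendsto (fun t => |pos X σ t x - pos X σ m x|) Filter.atTop
      (nhds |phi X σ x - pos X σ m x|) :=
    ((phi_tendsto X σ x).sub tendsto_const_nhds).abs
  apply le_of_tendsto habs
  filter_upwards [Filter.eventually_ge_atTop m] with t ht
  have : pos X σ t x - pos X σ m x = (pos X σ t - pos X σ m) x := by simp
  rw [this]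
  refine (pos_eval_le X _ (pos_sub_norm X σ σ t m) x i).trans ?_
  have h3 : Dfun X (pos X σ t - pos X σ m) ≤ 6*(1/2:ℝ)^m := pos_travel' X σ m t ht
  have := wseq_pos X i
  gcongr

lemma phi_B2 (x : X) (η : ℝ) (hη : 0 < η) :
    ∃ K : ℕ, ∀ k ≥ K, ∀ σ σ' : ℕ → Bool, (∀ i < k, σ i = σ' i) →
      |phi X σ x - phi X σ' x| ≤ η := by
  obtain ⟨i, hi⟩ : ∃ i, dist x (yseq X i) < η/8 :=
    (yseq_dense X).exists_dist_lt x (by linarith)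
  have hxy : ‖x - yseq X i‖ < η/8 := by rw [← dist_eq_norm]; exact hi
  obtain ⟨m, hm⟩ := exists_pow_lt_of_lt_one
    (show (0:ℝ) < (η/4) * wseq X i / 6 by
      have := wseq_pos X i; positivity)
    (by norm_num : (1:ℝ)/2 < 1)
  refine ⟨sfun X m, fun k hk σ σ' hagree => ?_⟩
  have hpos : pos X σ m = pos X σ' m :=
    pos_local X σ σ' m (fun j hj => hagree j (lt_of_lt_of_le hj hk))
  have h1 := phi_approx X σ x m i
  have h2 := phi_approx X σ' x m i
  rw [hpos] at h1
  have hq : 6*(1/2:ℝ)^m / wseq X i ≤ η/4 := by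
    rw [div_le_iff₀ (wseq_pos X i)]
    calc 6*(1/2:ℝ)^m ≤ 6 * ((η/4) * wseq X i / 6) := by linarith
      _ = η/4 * wseq X i := by ring
  calc |phi X σ x - phi X σ' x|
      ≤ |phi X σ x - pos X σ' m x| + |phi X σ' x - pos X σ' m x| := by
        have : phi X σ x - phi X σ' x
            = (phi X σ x - pos X σ' m x) - (phi X σ' x - pos X σ' m x) := by ring
        rw [this]
        exact abs_sub _ _
    _ ≤ (2 * ‖x - yseq X i‖ + 6*(1/2:ℝ)^m / wseq X i)
        + (2 * ‖x - yseq X i‖ + 6*(1/2:ℝ)^m / wseq X i) := add_le_add h1 h2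
    _ ≤ η := by linarith

lemma filter_range_card (n j : ℕ) (h : j ≤ n) :
    ((Finset.range n).filter (fun i => i < j)).card = j := by
  have : (Finset.range n).filter (fun i => i < j) = Finset.range j := by
    ext i
    simp only [Finset.mem_filter, Finset.mem_range]
    omega
  rw [this, Finset.card_range]

lemma phi_B3 (x : X) (η : ℝ) (hη : 0 < η) :
    ∃ σ : ℕ → Bool, ‖x‖ - η ≤ |phi X σ x| := by
  classical
  obtain ⟨n, hn⟩ : ∃ n, dist x (yseq X n) < η/6 :=
    (yseq_dense X).exists_dist_lt x (by linarith)
  have hxy : ‖x - yseq X n‖ < η/6 := by rw [← dist_eq_norm]; exact hn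
  obtain ⟨f, hf1, hf2⟩ := exists_dual_vector'' ℝ (yseq X n)
  choose jt hjlt hjD using fun t => aa_net X t (g := f) hf1
  set σs : ℕ → Bool := fun idx =>
    if ∃ t, sfun X t ≤ idx ∧ idx < sfun X (t+1) ∧ idx - sfun X t < jt t
    then true else false with hσs
  have hσs_iff : ∀ idx, σs idx = true ↔
      ∃ t, sfun X t ≤ idx ∧ idx < sfun X (t+1) ∧ idx - sfun X t < jt t := by
    intro idx
    simp only [hσs]
    split_ifs with h <;> simp [h]
  -- decode computation
  have hdec : ∀ t, decode X σs t = jt t := by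
    intro t
    rw [decode]
    have hcong : (Finset.range (nn X t)).filter (fun i => σs (sfun X t + i) = true)
        = (Finset.range (nn X t)).filter (fun i => i < jt t) := by
      apply Finset.filter_congr
      intro i hi
      rw [Finset.mem_range] at hi
      rw [hσs_iff]
      constructor
      · rintro ⟨t', h1, h2, h3⟩
        have ht'eq : t' = t := by
          by_contra hne
          rcases Nat.lt_or_ge t' t with hlt | hge
          · have : sfun X (t'+1) ≤ sfun X t := (sfun_mono X).le_iff_le.mpr hlt
            have hle : sfun X t ≤ sfun X t + i := Nat.le_add_right _ _
            omega
          · have ht : t < t' := by omega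
            have : sfun X (t+1) ≤ sfun X t' := (sfun_mono X).le_iff_le.mpr ht
            have hlt2 : sfun X t + i < sfun X (t+1) := by
              have : sfun X (t+1) = sfun X t + nn X t := rfl
              omega
            omega
        subst ht'eq
        omega
      · intro hij
        refine ⟨t, Nat.le_add_right _ _, ?_, by omega⟩
        have : sfun X (t+1) = sfun X t + nn X t := rfl
        omega
    rw [hcong, filter_range_card _ _ (hjlt t).le]
  -- position along the good branch
  have hmin : ∀ t, min (decode X σs t) (nn X t - 1) = jt t := by
    intro t
    rw [hdec t]
    have h1 := hjlt t
    have h2 := nn_pos X t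
    omega
  have hDsym : ∀ t j, Dfun X (aa X t j - f) = Dfun X (f - aa X t j) := by
    intro t j
    rw [← Dfun_neg X (aa X t j - f), neg_sub]
  have hgood : ∀ t, pos X σs (t+1) = aa X t (jt t) := by
    intro t
    induction t with
    | zero =>
      rw [pos, hmin 0]
      rw [if_pos]
      show Dfun X (aa X 0 (jt 0) - pos X σs 0) ≤ 3*(1/2:ℝ)^0
      have : pos X σs 0 = 0 := rfl
      rw [this, sub_zero]
      calc Dfun X (aa X 0 (jt 0)) ≤ ‖aa X 0 (jt 0)‖/2 := Dfun_le_half X _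
        _ ≤ 1/2 := by linarith [aa_norm_le X 0 (jt 0)]
        _ ≤ 3*(1/2:ℝ)^0 := by norm_num
    | succ t ih =>
      rw [pos, hmin (t+1)]
      rw [if_pos]
      show Dfun X (aa X (t+1) (jt (t+1)) - pos X σs (t+1)) ≤ 3*(1/2:ℝ)^(t+1)
      rw [ih]
      have hsplit : aa X (t+1) (jt (t+1)) - aa X t (jt t)
          = (aa X (t+1) (jt (t+1)) - f) + (f - aa X t (jt t)) := by abel
      rw [hsplit]
      refine (Dfun_add X _ _).trans ?_
      rw [hDsym]
      have h1 := hjD (t+1)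
      have h2 := hjD t
      have : ((1:ℝ)/2)^(t+1) = ((1:ℝ)/2)^t * (1/2) := pow_succ _ _
      linarith
  -- phi along good branch is close to f
  have hclose : |phi X σs x - f x| ≤ 4 * ‖x - yseq X n‖ := by
    have key : ∀ c : ℝ, 0 < c → |phi X σs x - f x| ≤ 4 * ‖x - yseq X n‖ + c := by
      intro c hc
      obtain ⟨t, ht⟩ := exists_pow_lt_of_lt_one
        (show (0:ℝ) < c * wseq X n / 4 by have := wseq_pos X n; positivity)
        (by norm_num : (1:ℝ)/2 < 1)
      have h1 := phi_approx X σs x (t+1) n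
      have h2 : |(pos X σs (t+1) - f) x| ≤ 2 * ‖x - yseq X n‖
          + Dfun X (pos X σs (t+1) - f) / wseq X n := by
        apply pos_eval_le
        calc ‖pos X σs (t+1) - f‖ ≤ ‖pos X σs (t+1)‖ + ‖f‖ := norm_sub_le _ _
          _ ≤ 2 := by linarith [pos_norm_le X σs (t+1), hf1]
      have h3 : Dfun X (pos X σs (t+1) - f) ≤ ((1:ℝ)/2)^t := by
        rw [hgood t, hDsym]
        exact hjD t
      have hw := wseq_pos X n
      have h4 : Dfun X (pos X σs (t+1) - f) / wseq X n ≤ ((1:ℝ)/2)^t / wseq X n := by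
        gcongr
      have h5 : ((1:ℝ)/2)^t / wseq X n ≤ c/4 := by
        rw [div_le_iff₀ hw]
        nlinarith
      have h6 : 6*((1:ℝ)/2)^(t+1) / wseq X n ≤ 3*(c/4) := by
        have hp : 6*((1:ℝ)/2)^(t+1) = 3*((1:ℝ)/2)^t := by rw [pow_succ]; ring
        rw [hp, mul_div_assoc]
        have : (0:ℝ) ≤ 3 := by norm_num
        nlinarith [h5]
      calc |phi X σs x - f x|
          ≤ |phi X σs x - pos X σs (t+1) x| + |pos X σs (t+1) x - f x| := by
            have : phi X σs x - f x
                = (phi X σs x - pos X σs (t+1) x) + (pos X σs (t+1) x - f x) := by ring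
            rw [this]; exact abs_add_le _ _
        _ ≤ (2 * ‖x - yseq X n‖ + 6*((1:ℝ)/2)^(t+1) / wseq X n)
            + (2 * ‖x - yseq X n‖ + ((1:ℝ)/2)^t / wseq X n) := by
            refine add_le_add h1 ?_
            have : pos X σs (t+1) x - f x = (pos X σs (t+1) - f) x := by simp
            rw [this]
            exact h2.trans (by linarith)
        _ ≤ 4 * ‖x - yseq X n‖ + c := by linarith
    by_contra hcon
    push_neg at hcon
    have := key ((|phi X σs x - f x| - 4 * ‖x - yseq X n‖)/2) (by linarith)
    linarith
  -- f almost norms x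
  have hfy : f (yseq X n) = ‖yseq X n‖ := by exact_mod_cast hf2
  have hfx : ‖x‖ - 2 * ‖x - yseq X n‖ ≤ |f x| := by
    have h1 : f x = f (yseq X n) + f (x - yseq X n) := by rw [map_sub]; ring
    have h2 : -‖x - yseq X n‖ ≤ f (x - yseq X n) := by
      have ha : |f (x - yseq X n)| ≤ ‖x - yseq X n‖ := by
        calc |f (x - yseq X n)| ≤ ‖f‖ * ‖x - yseq X n‖ := f.le_opNorm _
          _ ≤ 1 * ‖x - yseq X n‖ := mul_le_mul_of_nonneg_right hf1 (norm_nonneg _)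
          _ = ‖x - yseq X n‖ := one_mul _
      linarith [neg_abs_le (f (x - yseq X n))]
    have h3 : ‖x‖ - ‖x - yseq X n‖ ≤ ‖yseq X n‖ := by
      have := norm_sub_norm_le x (yseq X n)
      linarith
    have h4 : ‖x‖ - 2 * ‖x - yseq X n‖ ≤ f x := by
      rw [h1, hfy]; linarith
    linarith [le_abs_self (f x)]
  refine ⟨σs, ?_⟩
  have habs : |f x| - |phi X σs x| ≤ |f x - phi X σs x| := by
    have := abs_sub_abs_le_abs_sub (f x) (phi X σs x)
    linarith
  have h5 : |f x - phi X σs x| = |phi X σs x - f x| := abs_sub_comm _ _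
  have hnx : ‖x - yseq X n‖ < η/6 := hxy
  calc ‖x‖ - η ≤ (‖x‖ - 2 * ‖x - yseq X n‖) - 4 * ‖x - yseq X n‖ := by linarith
    _ ≤ |f x| - |phi X σs x - f x| := by linarith [hfx, hclose]
    _ ≤ |phi X σs x| := by linarith [habs, h5.symm.le]

noncomputable def rtr (k : ℕ) (σ : ℕ → Bool) : ℕ → Bool :=
  fun i => if i < k then σ i else false

def TS (x : X) : Set ℝ :=
  {r | ∃ (σ : ℕ → Bool) (k : ℕ), r = |phi X σ x - phi X (rtr k σ) x|}

noncomputable def Tf (x : X) : ℝ := sSup (TS X x)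

noncomputable def Nf (x : X) : ℝ := max ‖x‖ (Tf X x)

lemma phi_abs_le (σ : ℕ → Bool) (x : X) : |phi X σ x| ≤ ‖x‖ := by
  calc |phi X σ x| ≤ ‖phi X σ‖ * ‖x‖ := (phi X σ).le_opNorm x
    _ ≤ 1 * ‖x‖ := mul_le_mul_of_nonneg_right (phi_norm_le X σ) (norm_nonneg _)
    _ = ‖x‖ := one_mul _

lemma TS_nonempty (x : X) : (TS X x).Nonempty :=
  ⟨_, (fun _ => false), 0, rfl⟩

lemma TS_le (x : X) {r : ℝ} (hr : r ∈ TS X x) : r ≤ 2 * ‖x‖ := by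
  obtain ⟨σ, k, rfl⟩ := hr
  calc |phi X σ x - phi X (rtr k σ) x| ≤ |phi X σ x| + |phi X (rtr k σ) x| := abs_sub _ _
    _ ≤ 2 * ‖x‖ := by linarith [phi_abs_le X σ x, phi_abs_le X (rtr k σ) x]

lemma TS_bddAbove (x : X) : BddAbove (TS X x) :=
  ⟨2 * ‖x‖, fun _ hr => TS_le X x hr⟩

lemma Tf_nonneg (x : X) : 0 ≤ Tf X x := by
  obtain ⟨σ, k, hr⟩ : ∃ σ k, |phi X σ x - phi X (rtr k σ) x| ∈ TS X x :=
    ⟨(fun _ => false), 0, ⟨_, 0, rfl⟩⟩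
  exact le_trans (abs_nonneg _) (le_csSup (TS_bddAbove X x) hr)

lemma Tf_le (x : X) : Tf X x ≤ 2 * ‖x‖ :=
  csSup_le (TS_nonempty X x) (fun _ hr => TS_le X x hr)

lemma Tf_mem_le (x : X) (σ : ℕ → Bool) (k : ℕ) :
    |phi X σ x - phi X (rtr k σ) x| ≤ Tf X x :=
  le_csSup (TS_bddAbove X x) ⟨σ, k, rfl⟩

lemma Tf_add (x y : X) : Tf X (x + y) ≤ Tf X x + Tf X y := by
  apply csSup_le (TS_nonempty X _)
  rintro r ⟨σ, k, rfl⟩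
  have h1 : phi X σ (x+y) - phi X (rtr k σ) (x+y)
      = (phi X σ x - phi X (rtr k σ) x) + (phi X σ y - phi X (rtr k σ) y) := by
    rw [map_add, map_add]; ring
  rw [h1]
  calc |(phi X σ x - phi X (rtr k σ) x) + (phi X σ y - phi X (rtr k σ) y)|
      ≤ |phi X σ x - phi X (rtr k σ) x| + |phi X σ y - phi X (rtr k σ) y| := abs_add_le _ _
    _ ≤ Tf X x + Tf X y := add_le_add (Tf_mem_le X x σ k) (Tf_mem_le X y σ k)

lemma Tf_smul (c : ℝ) (x : X) : Tf X (c • x) = |c| * Tf X x := by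
  have hkey : ∀ σ k, phi X σ (c • x) - phi X (rtr k σ) (c • x)
      = c * (phi X σ x - phi X (rtr k σ) x) := by
    intro σ k
    rw [map_smul, map_smul]
    simp [smul_eq_mul]
    ring
  rcases eq_or_ne c 0 with hc | hc
  · subst hc
    simp only [abs_zero, zero_mul, zero_smul]
    apply le_antisymm
    · apply csSup_le (TS_nonempty X _)
      rintro r ⟨σ, k, rfl⟩
      simp
    · exact Tf_nonneg X 0
  · have hc' : 0 < |c| := abs_pos.mpr hc
    apply le_antisymm
    · apply csSup_le (TS_nonempty X _)
      rintro r ⟨σ, k, rfl⟩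
      rw [hkey, abs_mul]
      exact mul_le_mul_of_nonneg_left (Tf_mem_le X x σ k) (abs_nonneg c)
    · rw [← le_div_iff₀' hc']
      apply csSup_le (TS_nonempty X _)
      rintro r ⟨σ, k, rfl⟩
      rw [le_div_iff₀' hc']
      calc |c| * |phi X σ x - phi X (rtr k σ) x|
          = |c * (phi X σ x - phi X (rtr k σ) x)| := (abs_mul _ _).symm
        _ = |phi X σ (c • x) - phi X (rtr k σ) (c • x)| := by rw [hkey]
        _ ≤ Tf X (c • x) := Tf_mem_le X (c • x) σ k

lemma Nf_norm_le (x : X) : ‖x‖ ≤ Nf X x := le_max_left _ _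

lemma Nf_le (x : X) : Nf X x ≤ 2 * ‖x‖ :=
  max_le (by linarith [norm_nonneg x]) (Tf_le X x)

lemma Nf_eq_zero_iff (x : X) : Nf X x = 0 ↔ x = 0 := by
  constructor
  · intro h
    have := Nf_norm_le X x
    have : ‖x‖ ≤ 0 := by linarith
    simpa using le_antisymm this (norm_nonneg x)
  · rintro rfl
    apply le_antisymm
    · simpa using Nf_le X 0
    · exact le_trans (norm_nonneg _) (Nf_norm_le X 0)

lemma Nf_add (x y : X) : Nf X (x + y) ≤ Nf X x + Nf X y := by
  apply max_le
  · calc ‖x + y‖ ≤ ‖x‖ + ‖y‖ := norm_add_le _ _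
      _ ≤ Nf X x + Nf X y := add_le_add (Nf_norm_le X x) (Nf_norm_le X y)
  · calc Tf X (x + y) ≤ Tf X x + Tf X y := Tf_add X x y
      _ ≤ Nf X x + Nf X y := add_le_add (le_max_right _ _) (le_max_right _ _)

lemma Nf_smul (c : ℝ) (x : X) : Nf X (c • x) = |c| * Nf X x := by
  rw [Nf, Nf, norm_smul, Tf_smul]
  rw [Real.norm_eq_abs]
  rcases le_total (‖x‖) (Tf X x) with h | h
  · rw [max_eq_right h, max_eq_right (by nlinarith [abs_nonneg c])]
  · rw [max_eq_left h, max_eq_left (by nlinarith [abs_nonneg c])]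

set_option maxHeartbeats 1000000 in
set_option synthInstance.maxHeartbeats 400000 in
lemma phi_M_bound (M : Submodule ℝ X) (hM : FiniteDimensional ℝ M) (δ : ℝ) (hδ : 0 < δ) :
    ∃ K : ℕ, ∀ k ≥ K, ∀ σ : ℕ → Bool, ∀ v ∈ M,
      |phi X σ v - phi X (rtr k σ) v| ≤ δ * ‖v‖ := by
  classical
  set r := Module.finrank ℝ M with hr
  set b : Module.Basis (Fin r) ℝ M := Module.finBasis ℝ M with hb
  have hbound : ∀ j : Fin r, ∃ Cj : ℝ, 0 ≤ Cj ∧ ∀ m : M, |(b.coord j) m| ≤ Cj * ‖m‖ := by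
    intro j
    set cj : M →L[ℝ] ℝ := LinearMap.toContinuousLinearMap (b.coord j) with hcj
    refine ⟨‖cj‖, ContinuousLinearMap.opNorm_nonneg _, fun m => ?_⟩
    have h1 : (b.coord j) m = cj m := by rw [hcj]; simp
    rw [h1]
    exact cj.le_opNorm m
  choose Cj hCj0 hCjle using hbound
  set CM : ℝ := (∑ j, Cj j) + 1 with hCM
  have hsumC : (0:ℝ) ≤ ∑ j, Cj j := Finset.sum_nonneg (fun j _ => hCj0 j)
  have hCMpos : 0 < CM := by rw [hCM]; linarith
  have hK : ∀ j : Fin r, ∃ K : ℕ, ∀ k ≥ K, ∀ σ σ' : ℕ → Bool, (∀ i < k, σ i = σ' i) →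
      |phi X σ ((b j : M) : X) - phi X σ' ((b j : M) : X)| ≤ δ/CM :=
    fun j => phi_B2 X _ (δ/CM) (by positivity)
  choose Kj hKj using hK
  refine ⟨Finset.univ.sup Kj, fun k hk σ v hv => ?_⟩
  set vM : M := ⟨v, hv⟩ with hvM
  set g : X →L[ℝ] ℝ := phi X σ - phi X (rtr k σ) with hg
  have hagree : ∀ i < k, σ i = rtr k σ i := by
    intro i hi
    rw [rtr]
    simp [hi]
  have hgj : ∀ j : Fin r, |g ((b j : M) : X)| ≤ δ/CM := by
    intro j
    have hKle : Kj j ≤ Finset.univ.sup Kj := Finset.le_sup (Finset.mem_univ j)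
    have := hKj j k (le_trans hKle hk) σ (rtr k σ) hagree
    simpa [hg] using this
  have hsum : v = ∑ j, b.repr vM j • ((b j : M) : X) := by
    have h1 := congrArg (M.subtype) (b.sum_repr vM)
    rw [map_sum] at h1
    simp only [map_smul, Submodule.subtype_apply] at h1
    exact h1.symm
  have hgv : g v = ∑ j, b.repr vM j * g ((b j : M) : X) := by
    conv_lhs => rw [hsum]
    rw [map_sum]
    exact Finset.sum_congr rfl (fun j _ => by rw [map_smul]; simp)
  have hcoord : ∀ j : Fin r, |b.repr vM j| ≤ Cj j * ‖v‖ := by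
    intro j
    have h1 : b.repr vM j = (b.coord j) vM := by simp [Module.Basis.coord_apply]
    have h2 : ‖vM‖ = ‖v‖ := rfl
    rw [h1]
    calc |(b.coord j) vM| ≤ Cj j * ‖vM‖ := hCjle j vM
      _ = Cj j * ‖v‖ := by rw [h2]
  have habs : |g v| ≤ ∑ j, Cj j * ‖v‖ * (δ/CM) := by
    rw [hgv]
    refine (Finset.abs_sum_le_sum_abs _ _).trans ?_
    apply Finset.sum_le_sum
    intro j _
    rw [abs_mul]
    have h1 := hcoord j
    have h2 := hgj j
    have h4 : (0:ℝ) ≤ δ/CM := by positivity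
    nlinarith [abs_nonneg (g ((b j : M) : X)), abs_nonneg (b.repr vM j),
      hCj0 j, norm_nonneg v]
  have hfinal : ∑ j, Cj j * ‖v‖ * (δ/CM) ≤ δ * ‖v‖ := by
    have h1 : ∑ j, Cj j * ‖v‖ * (δ/CM) = (∑ j, Cj j) * (‖v‖ * (δ/CM)) := by
      rw [Finset.sum_mul]
      exact Finset.sum_congr rfl (fun j _ => by ring)
    rw [h1]
    have h2 : (∑ j, Cj j) ≤ CM := by rw [hCM]; linarith
    have h5 : (0:ℝ) ≤ ‖v‖ * (δ/CM) := by positivity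
    calc (∑ j, Cj j) * (‖v‖ * (δ/CM)) ≤ CM * (‖v‖ * (δ/CM)) :=
          mul_le_mul_of_nonneg_right h2 h5
      _ = δ * ‖v‖ := by field_simp
  have : |g v| ≤ δ * ‖v‖ := le_trans habs hfinal
  simpa [hg] using this

lemma le_of_forall_sub {a b : ℝ} (h : ∀ η > 0, a - η ≤ b) : a ≤ b := by
  by_contra hc
  push_neg at hc
  have := h ((a-b)/2) (by linarith)
  linarith

end Scheme


/-- Lemma 3.3: every separable normed space admits an equivalent norm `N` such that for
every finite-dimensional subspace `M` and every `ε > 0` there is a finite-codimensional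
subspace `L` with `M ∩ L = {0}` such that the projection of `⟨L,M⟩` has `N`-operator
norm `< 1 + ε`. -/
theorem exists_equivalent_norm_with_small_projections
    (X : Type*) [NormedAddCommGroup X] [NormedSpace ℝ X]
    [TopologicalSpace.SeparableSpace X] :
    ∃ N : X → ℝ,
      -- `N` is a norm on `X`
      (∀ x : X, N x = 0 ↔ x = 0) ∧
      (∀ x y : X, N (x + y) ≤ N x + N y) ∧
      (∀ (c : ℝ) (x : X), N (c • x) = |c| * N x) ∧
      -- `N` is equivalent to the original norm
      (∃ C₁ C₂ : ℝ, 0 < C₁ ∧ 0 < C₂ ∧ ∀ x : X, C₁ * ‖x‖ ≤ N x ∧ N x ≤ C₂ * ‖x‖) ∧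
      -- the projection property
      (∀ M : Submodule ℝ X, FiniteDimensional ℝ M → ∀ ε : ℝ, 0 < ε →
        ∃ L : Submodule ℝ X,
          -- `L` has finite codimension: it has a finite-dimensional complement
          (∃ M' : Submodule ℝ X, FiniteDimensional ℝ M' ∧ IsCompl L M') ∧
          M ⊓ L = ⊥ ∧
          -- the projection `P : M + L → L`, `P(v + u) = u`, satisfies `|||P||| < 1 + ε`
          (∃ C : ℝ, C < 1 + ε ∧
            ∀ u ∈ L, ∀ v ∈ M, N u ≤ C * N (v + u))) := by
  classical
  refine ⟨Nf X, Nf_eq_zero_iff X, Nf_add X, Nf_smul X,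
    ⟨1, 2, one_pos, two_pos, fun x => ⟨by simpa using Nf_norm_le X x, Nf_le X x⟩⟩, ?_⟩
  intro M hM ε hε
  set m : ℝ := min ε 1 with hm
  have hm0 : 0 < m := lt_min hε one_pos
  have hm1 : m ≤ 1 := min_le_right _ _
  have hmε : m ≤ ε := min_le_left _ _
  set δ : ℝ := m / 4 with hδdef
  have hδpos : 0 < δ := by rw [hδdef]; linarith
  have hδ14 : δ ≤ 1/4 := by rw [hδdef]; linarith
  obtain ⟨K, hKb⟩ := phi_M_bound X M hM δ hδpos
  set exts : (Fin K → Bool) → (ℕ → Bool) :=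
    fun s i => if h : i < K then s ⟨i, h⟩ else false with hexts
  set Φ : X →ₗ[ℝ] ((Fin K → Bool) → ℝ) :=
    LinearMap.pi (fun s => ((phi X (exts s) : X →ₗ[ℝ] ℝ))) with hΦ
  set L := LinearMap.ker Φ with hL
  have hLker : ∀ u ∈ L, ∀ k ≤ K, ∀ σ : ℕ → Bool, phi X (rtr k σ) u = 0 := by
    intro u hu k hk σ
    have h0 : rtr k σ = exts (fun i : Fin K => rtr k σ (i : ℕ)) := by
      funext i
      simp only [hexts]
      by_cases h : i < K
      · rw [dif_pos h]
      · rw [dif_neg h, rtr, if_neg (by omega)]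
    rw [h0]
    have h1 : Φ u = 0 := LinearMap.mem_ker.mp hu
    have h2 := congrFun h1 (fun i : Fin K => rtr k σ (i : ℕ))
    simpa [hΦ, LinearMap.pi_apply] using h2
  have hK0 : ∀ u ∈ L, ∀ σ : ℕ → Bool, phi X (rtr K σ) u = 0 :=
    fun u hu σ => hLker u hu K le_rfl σ
  refine ⟨L, ?_, ?_, ?_⟩
  · -- finite codimension
    obtain ⟨M', hcompl⟩ := Submodule.exists_isCompl L
    refine ⟨M', ?_, hcompl⟩
    have e2 : M' ≃ₗ[ℝ] (X ⧸ L) := (Submodule.quotientEquivOfIsCompl L M' hcompl).symm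
    have e1 : (X ⧸ L) ≃ₗ[ℝ] LinearMap.range Φ := by
      rw [hL]
      exact LinearMap.quotKerEquivRange Φ
    have hfd : FiniteDimensional ℝ (LinearMap.range Φ) := inferInstance
    exact Module.Finite.equiv (e2.trans e1).symm
  · -- M ⊓ L = ⊥
    rw [eq_bot_iff]
    rintro v hv
    obtain ⟨hvM, hvL⟩ := Submodule.mem_inf.mp hv
    simp only [Submodule.mem_bot]
    have hsm : ‖v‖ ≤ δ * ‖v‖ := by
      apply le_of_forall_sub
      intro η hη
      obtain ⟨σ, hσ⟩ := phi_B3 X v η hη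
      have h1 : phi X (rtr K σ) v = 0 := hK0 v hvL σ
      have h2 := hKb K le_rfl σ v hvM
      rw [h1, sub_zero] at h2
      linarith
    have hn : ‖v‖ ≤ 0 := by nlinarith [norm_nonneg v]
    simpa using le_antisymm hn (norm_nonneg v)
  · -- the projection bound
    refine ⟨1 + m / 2, by linarith, ?_⟩
    intro u hu v hv
    have hTu : Tf X u ≤ Nf X (v + u) + δ * ‖v‖ := by
      apply csSup_le (TS_nonempty X u)
      rintro rr ⟨σ, k, rfl⟩
      set k' := max k K with hk'
      have hk'K : K ≤ k' := le_max_right _ _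
      have heq : |phi X σ u - phi X (rtr k σ) u| = |phi X σ u - phi X (rtr k' σ) u| := by
        rcases le_total K k with h | h
        · rw [hk', max_eq_left h]
        · rw [hLker u hu k h σ, hk', max_eq_right h, hK0 u hu σ]
      rw [heq]
      have hsplit : phi X σ u - phi X (rtr k' σ) u
          = (phi X σ (v+u) - phi X (rtr k' σ) (v+u)) - (phi X σ v - phi X (rtr k' σ) v) := by
        rw [map_add, map_add]; ring
      rw [hsplit]
      have h1 : |phi X σ (v+u) - phi X (rtr k' σ) (v+u)| ≤ Tf X (v+u) :=
        Tf_mem_le X (v+u) σ k'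
      have h2 : |phi X σ v - phi X (rtr k' σ) v| ≤ δ * ‖v‖ := hKb k' hk'K σ v hv
      have h3 : Tf X (v+u) ≤ Nf X (v+u) := le_max_right _ _
      calc |(phi X σ (v+u) - phi X (rtr k' σ) (v+u)) - (phi X σ v - phi X (rtr k' σ) v)|
          ≤ |phi X σ (v+u) - phi X (rtr k' σ) (v+u)| + |phi X σ v - phi X (rtr k' σ) v| :=
            abs_sub _ _
        _ ≤ Nf X (v+u) + δ * ‖v‖ := by linarith
    have hNu : ‖u‖ ≤ Tf X u := by
      apply le_of_forall_sub
      intro η hη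
      obtain ⟨σ, hσ⟩ := phi_B3 X u η hη
      have h1 : phi X (rtr K σ) u = 0 := hK0 u hu σ
      have h2 : |phi X σ u - phi X (rtr K σ) u| ≤ Tf X u := Tf_mem_le X u σ K
      rw [h1, sub_zero] at h2
      linarith
    have hvb : (1 - δ) * ‖v‖ ≤ Nf X (v + u) := by
      apply le_of_forall_sub
      intro η hη
      obtain ⟨σ, hσ⟩ := phi_B3 X v η hη
      have h2 := hKb K le_rfl σ v hv
      have h3 : phi X (rtr K σ) (v + u) = phi X (rtr K σ) v := by
        rw [map_add, hK0 u hu σ, add_zero]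
      have h4 : |phi X (rtr K σ) (v+u)| ≤ ‖v + u‖ := phi_abs_le X _ _
      rw [h3] at h4
      have h5 : |phi X σ v| - δ*‖v‖ ≤ |phi X (rtr K σ) v| := by
        have := abs_sub_abs_le_abs_sub (phi X σ v) (phi X (rtr K σ) v)
        linarith
      have h6 : ‖v+u‖ ≤ Nf X (v+u) := Nf_norm_le X _
      linarith
    have hNu2 : Nf X u ≤ Nf X (v+u) + δ * ‖v‖ := by
      apply max_le _ hTu
      calc ‖u‖ ≤ Tf X u := hNu
        _ ≤ Nf X (v+u) + δ * ‖v‖ := hTu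
    have hA : (0:ℝ) ≤ Nf X (v+u) := le_trans (norm_nonneg _) (Nf_norm_le X _)
    have hB : (0:ℝ) ≤ ‖v‖ := norm_nonneg v
    -- arithmetic: δ = m/4, m ≤ 1, so ‖v‖ ≤ (4/3) Nf(v+u), δ‖v‖ ≤ (m/3)Nf ≤ (m/2)Nf
    have hv43 : ‖v‖ ≤ (4/3) * Nf X (v+u) := by
      rw [hδdef] at hvb
      nlinarith
    have hfin : δ * ‖v‖ ≤ (m/2) * Nf X (v+u) := by
      rw [hδdef]
      nlinarith
    calc Nf X u ≤ Nf X (v+u) + δ * ‖v‖ := hNu2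
      _ ≤ Nf X (v+u) + (m/2) * Nf X (v+u) := by linarith
      _ = (1 + m/2) * Nf X (v+u) := by ring
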